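/- Fix reals Ξ > 1, c > -1, Z > 0, ν, and a continuous function ρ : [1,Ξ] → ℝ. Define W(X) := √(X+c)/√Z − ν + (1/2)·∫₁^Ξ ρ(T) dT /((√(X+c)+√(T+c))·√(T+c)) for X ≥ 1. Then for every X ≥ 1: ∫₁^Ξ ρ(Y)·(W(X)−W(Y))/(X−Y) dY = −(W(X)+ν)² + (X+c)/Z + (1/√Z)·∫₁^Ξ ρ(Y)/√(Y+c) dY, where the integrand (W(X)−W(Y))/(X−Y) is extended continuously to Y = X. -/

import Mathlib

open MeasureTheory

set_option maxHeartbeats 1000000 in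
/-- For `Ξ > 1`, `c > -1`, `Z > 0`, `ν ∈ ℝ` and continuous `ρ` on `[1,Ξ]`, the ansatz
`W(X) = √(X+c)/√Z − ν + (1/2)∫₁^Ξ ρ(T)/((√(X+c)+√(T+c))√(T+c)) dT` satisfies, for `X ≥ 1`,
`∫₁^Ξ ρ(Y)(W(X)−W(Y))/(X−Y) dY = −(W(X)+ν)² + (X+c)/Z + (1/√Z)∫₁^Ξ ρ(Y)/√(Y+c) dY`,
the integrand being extended continuously to `Y = X`. -/
theorem stmt_2 (Ξ c Z ν : ℝ) (hΞ : 1 < Ξ) (hc : -1 < c) (hZ : 0 < Z)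
    (ρ : ℝ → ℝ) (hρ : ContinuousOn ρ (Set.Icc 1 Ξ))
    (W : ℝ → ℝ)
    (hW : ∀ X, W X = Real.sqrt (X + c) / Real.sqrt Z - ν +
      (1 / 2) * ∫ T in (1 : ℝ)..Ξ,
        ρ T / ((Real.sqrt (X + c) + Real.sqrt (T + c)) * Real.sqrt (T + c))) :
    ∀ X, 1 ≤ X →
      ∃ F : ℝ → ℝ, ContinuousOn F (Set.Icc 1 Ξ) ∧
        (∀ Y ∈ Set.Icc 1 Ξ, Y ≠ X → F Y = ρ Y * (W X - W Y) / (X - Y)) ∧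
        ∫ Y in (1 : ℝ)..Ξ, F Y =
          -(W X + ν) ^ 2 + (X + c) / Z +
            (1 / Real.sqrt Z) * ∫ Y in (1 : ℝ)..Ξ, ρ Y / Real.sqrt (Y + c) := by
  intro X hX
  have hΞ1 : (1:ℝ) ≤ Ξ := hΞ.le
  have hc0 : (0:ℝ) < 1 + c := by linarith
  set s : ℝ → ℝ := fun t => Real.sqrt (max (t + c) (1 + c)) with hs_def
  have hs_cont : Continuous s := Real.continuous_sqrt.comp ((continuous_id.add continuous_const).max continuous_const)
  have hs_pos : ∀ t, 0 < s t := fun t => Real.sqrt_pos.2 (lt_of_lt_of_le hc0 (le_max_right _ _))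
  have hs_eq : ∀ t, 1 ≤ t → s t = Real.sqrt (t + c) := by
    intro t ht
    simp only [hs_def]
    rw [max_eq_left (by linarith)]
  have hs_sq : ∀ t, 1 ≤ t → s t ^ 2 = t + c := by
    intro t ht
    rw [hs_eq t ht, Real.sq_sqrt (by linarith)]
  have hss : ∀ a b : ℝ, 0 < s a + s b := fun a b => add_pos (hs_pos a) (hs_pos b)
  set ρ' : ℝ → ℝ := fun t => ρ (max 1 (min t Ξ)) with hρ'_def
  have hρ'_cont : Continuous ρ' := by
    apply hρ.comp_continuous
    · exact continuous_const.max (continuous_id.min continuous_const)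
    · intro x
      exact ⟨le_max_left _ _, max_le hΞ1 (min_le_right _ _)⟩
  have hρ'_eq : ∀ t ∈ Set.Icc (1:ℝ) Ξ, ρ' t = ρ t := by
    intro t ht
    simp only [hρ'_def]
    rw [min_eq_left ht.2, max_eq_right ht.1]
  have huIcc : Set.uIcc (1:ℝ) Ξ = Set.Icc 1 Ξ := Set.uIcc_of_le hΞ1
  have hsZ : (0:ℝ) < Real.sqrt Z := Real.sqrt_pos.2 hZ
  -- rewrite W
  have hW' : ∀ t, 1 ≤ t → W t = s t / Real.sqrt Z - ν +
      (1/2) * ∫ T in (1:ℝ)..Ξ, ρ' T / ((s t + s T) * s T) := by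
    intro t ht
    rw [hW t, hs_eq t ht]
    congr 2
    apply intervalIntegral.integral_congr
    intro T hT
    rw [huIcc] at hT
    simp only [hρ'_eq T hT, hs_eq T hT.1]
  -- basic kernels
  set f : ℝ → ℝ := fun Y => ρ' Y / ((s X + s Y) * s Y) with hf_def
  have hf_cont : Continuous f :=
    hρ'_cont.div ((continuous_const.add hs_cont).mul hs_cont)
      (fun Y => (mul_pos (hss X Y) (hs_pos Y)).ne')
  set L : ℝ → ℝ → ℝ := fun Y T => ρ' T / ((s X + s T) * ((s Y + s T) * s T)) with hL_def
  have hL_cont : Continuous (Function.uncurry L) := by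
    apply Continuous.div
    · exact hρ'_cont.comp continuous_snd
    · exact ((continuous_const.add (hs_cont.comp continuous_snd)).mul
        (((hs_cont.comp continuous_fst).add (hs_cont.comp continuous_snd)).mul
          (hs_cont.comp continuous_snd)))
    · rintro ⟨Y, T⟩
      exact (mul_pos (hss X T) (mul_pos (hss Y T) (hs_pos T))).ne'
  set J : ℝ → ℝ := fun Y => ∫ T in (1:ℝ)..Ξ, L Y T with hJ_def
  have hJ_cont : Continuous J :=
    intervalIntegral.continuous_parametric_intervalIntegral_of_continuous' hL_cont 1 Ξ
  set G : ℝ → ℝ := fun Y => (1 / Real.sqrt Z - (1/2) * J Y) / (s X + s Y) with hG_def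
  have hG_cont : Continuous G := by
    apply Continuous.div
    · exact continuous_const.sub (continuous_const.mul hJ_cont)
    · exact continuous_const.add hs_cont
    · exact fun Y => (hss X Y).ne'
  refine ⟨fun Y => ρ' Y * G Y, (hρ'_cont.mul hG_cont).continuousOn, ?_, ?_⟩
  · -- pointwise identification
    intro Y hY hYX
    have hY1 : (1:ℝ) ≤ Y := hY.1
    have hXY : X - Y ≠ 0 := sub_ne_zero.2 (Ne.symm hYX)
    have hsXY : X - Y = (s X - s Y) * (s X + s Y) := by
      have hx := hs_sq X hX
      have hy := hs_sq Y hY1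
      linear_combination hy - hx
    have hint1 : IntervalIntegrable (fun T => ρ' T / ((s X + s T) * s T)) volume 1 Ξ :=
      (hρ'_cont.div ((continuous_const.add hs_cont).mul hs_cont)
        (fun T => (mul_pos (hss X T) (hs_pos T)).ne')).intervalIntegrable 1 Ξ
    have hint2 : IntervalIntegrable (fun T => ρ' T / ((s Y + s T) * s T)) volume 1 Ξ :=
      (hρ'_cont.div ((continuous_const.add hs_cont).mul hs_cont)
        (fun T => (mul_pos (hss Y T) (hs_pos T)).ne')).intervalIntegrable 1 Ξ
    have h1 : (∫ T in (1:ℝ)..Ξ, ρ' T / ((s X + s T) * s T))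
        - (∫ T in (1:ℝ)..Ξ, ρ' T / ((s Y + s T) * s T))
        = (s Y - s X) * J Y := by
      calc (∫ T in (1:ℝ)..Ξ, ρ' T / ((s X + s T) * s T))
            - (∫ T in (1:ℝ)..Ξ, ρ' T / ((s Y + s T) * s T))
          = ∫ T in (1:ℝ)..Ξ,
              (ρ' T / ((s X + s T) * s T) - ρ' T / ((s Y + s T) * s T)) :=
            (intervalIntegral.integral_sub hint1 hint2).symm
        _ = ∫ T in (1:ℝ)..Ξ, (s Y - s X) * L Y T := by
            apply intervalIntegral.integral_congr
            intro T _
            have e1 := (hss X T).ne'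
            have e2 := (hss Y T).ne'
            have e3 := (hs_pos T).ne'
            simp only [hL_def]
            field_simp
            ring
        _ = (s Y - s X) * J Y := intervalIntegral.integral_const_mul _ _
    have hWd : W X - W Y = (X - Y) * G Y := by
      rw [hW' X hX, hW' Y hY1, hsXY]
      simp only [hG_def]
      have hc1 : ∀ r : ℝ, (s X - s Y) * (s X + s Y) * (r / (s X + s Y))
          = (s X - s Y) * r := by
        intro r
        have e := (hss X Y).ne'
        field_simp
      rw [hc1]
      linear_combination h1 / 2
    show ρ' Y * G Y = ρ Y * (W X - W Y) / (X - Y)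
    rw [hρ'_eq Y hY, hWd]
    field_simp
  · -- the integral identity
    set I : ℝ := ∫ Y in (1:ℝ)..Ξ, f Y with hI_def
    set g : ℝ → ℝ := fun Y => ρ' Y / (s X + s Y) with hg_def
    have hg_cont : Continuous g :=
      hρ'_cont.div (continuous_const.add hs_cont) (fun Y => (hss X Y).ne')
    have step1 : ∫ Y in (1:ℝ)..Ξ, ρ' Y * G Y
        = (1 / Real.sqrt Z) * (∫ Y in (1:ℝ)..Ξ, g Y)
          - (1/2) * ∫ Y in (1:ℝ)..Ξ, g Y * J Y :=
      calc ∫ Y in (1:ℝ)..Ξ, ρ' Y * G Y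
          = ∫ Y in (1:ℝ)..Ξ, ((1 / Real.sqrt Z) * g Y - (1/2) * (g Y * J Y)) := by
            apply intervalIntegral.integral_congr
            intro Y _
            have e1 := (hss X Y).ne'
            simp only [hG_def, hg_def]
            field_simp
        _ = (∫ Y in (1:ℝ)..Ξ, (1 / Real.sqrt Z) * g Y)
            - ∫ Y in (1:ℝ)..Ξ, (1/2) * (g Y * J Y) :=
            intervalIntegral.integral_sub
              ((continuous_const.mul hg_cont).intervalIntegrable 1 Ξ)
              ((continuous_const.mul (hg_cont.mul hJ_cont)).intervalIntegrable 1 Ξ)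
        _ = (1 / Real.sqrt Z) * (∫ Y in (1:ℝ)..Ξ, g Y)
            - (1/2) * ∫ Y in (1:ℝ)..Ξ, g Y * J Y := by
            rw [intervalIntegral.integral_const_mul, intervalIntegral.integral_const_mul]
    have step2 : ∫ Y in (1:ℝ)..Ξ, g Y
        = (∫ Y in (1:ℝ)..Ξ, ρ' Y / s Y) - s X * I :=
      calc ∫ Y in (1:ℝ)..Ξ, g Y
          = ∫ Y in (1:ℝ)..Ξ, (ρ' Y / s Y - s X * f Y) := by
            apply intervalIntegral.integral_congr
            intro Y _
            have e1 := (hss X Y).ne'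
            have e2 := (hs_pos Y).ne'
            simp only [hg_def, hf_def]
            field_simp
            ring
        _ = (∫ Y in (1:ℝ)..Ξ, ρ' Y / s Y) - ∫ Y in (1:ℝ)..Ξ, s X * f Y :=
            intervalIntegral.integral_sub
              ((hρ'_cont.div hs_cont (fun Y => (hs_pos Y).ne')).intervalIntegrable 1 Ξ)
              ((continuous_const.mul hf_cont).intervalIntegrable 1 Ξ)
        _ = (∫ Y in (1:ℝ)..Ξ, ρ' Y / s Y) - s X * I := by
            rw [intervalIntegral.integral_const_mul, hI_def]
    -- step 3 : the double integral via Fubini/symmetry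
    have hk_cont : Continuous (fun p : ℝ × ℝ => g p.1 * L p.1 p.2) :=
      (hg_cont.comp continuous_fst).mul hL_cont
    have hk'_cont : Continuous (fun p : ℝ × ℝ => g p.2 * L p.2 p.1) :=
      hk_cont.comp (continuous_snd.prodMk continuous_fst)
    have hswap : (∫ Y in (1:ℝ)..Ξ, ∫ T in (1:ℝ)..Ξ, g Y * L Y T)
        = ∫ Y in (1:ℝ)..Ξ, ∫ T in (1:ℝ)..Ξ, g T * L T Y := by
      simp only [intervalIntegral.integral_of_le hΞ1]
      have hInt : Integrable (Function.uncurry (fun Y T => g Y * L Y T))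
          ((volume.restrict (Set.Ioc (1:ℝ) Ξ)).prod (volume.restrict (Set.Ioc (1:ℝ) Ξ))) := by
        rw [Measure.prod_restrict]
        apply (hk_cont.continuousOn.integrableOn_compact
          (isCompact_Icc.prod isCompact_Icc)).mono_set
        exact Set.prod_mono Set.Ioc_subset_Icc_self Set.Ioc_subset_Icc_self
      exact MeasureTheory.integral_integral_swap hInt
    have hint3 : IntervalIntegrable (fun Y => ∫ T in (1:ℝ)..Ξ, g Y * L Y T) volume 1 Ξ := by
      have hu : Continuous (Function.uncurry (fun Y T => g Y * L Y T)) := hk_cont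
      exact (intervalIntegral.continuous_parametric_intervalIntegral_of_continuous'
        hu 1 Ξ).intervalIntegrable 1 Ξ
    have hint4 : IntervalIntegrable (fun Y => ∫ T in (1:ℝ)..Ξ, g T * L T Y) volume 1 Ξ := by
      have hu : Continuous (Function.uncurry (fun Y T => g T * L T Y)) := hk'_cont
      exact (intervalIntegral.continuous_parametric_intervalIntegral_of_continuous'
        hu 1 Ξ).intervalIntegrable 1 Ξ
    have hD1 : (∫ Y in (1:ℝ)..Ξ, g Y * J Y)
        = ∫ Y in (1:ℝ)..Ξ, ∫ T in (1:ℝ)..Ξ, g Y * L Y T :=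
      intervalIntegral.integral_congr
        (fun Y _ => (intervalIntegral.integral_const_mul _ _).symm)
    have hinner : ∀ Y, ((∫ T in (1:ℝ)..Ξ, g Y * L Y T)
        + ∫ T in (1:ℝ)..Ξ, g T * L T Y) = f Y * I := by
      intro Y
      have ha : IntervalIntegrable (fun T => g Y * L Y T) volume 1 Ξ :=
        (continuous_const.mul
          (hL_cont.comp (continuous_const.prodMk continuous_id))).intervalIntegrable 1 Ξ
      have hb : IntervalIntegrable (fun T => g T * L T Y) volume 1 Ξ :=
        (hg_cont.mul
          (hL_cont.comp (continuous_id.prodMk continuous_const))).intervalIntegrable 1 Ξ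
      calc ((∫ T in (1:ℝ)..Ξ, g Y * L Y T) + ∫ T in (1:ℝ)..Ξ, g T * L T Y)
          = ∫ T in (1:ℝ)..Ξ, (g Y * L Y T + g T * L T Y) :=
            (intervalIntegral.integral_add ha hb).symm
        _ = ∫ T in (1:ℝ)..Ξ, f Y * f T := by
            apply intervalIntegral.integral_congr
            intro T _
            have e1 := (hss X Y).ne'
            have e2 := (hss X T).ne'
            have e3 := (hss Y T).ne'
            have e4 := (hs_pos Y).ne'
            have e5 := (hs_pos T).ne'
            simp only [hg_def, hf_def, hL_def]
            field_simp
            have hinv : (s Y + s T)⁻¹ * (s Y + s T) = 1 := inv_mul_cancel₀ e3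
            linear_combination (ρ' Y * ρ' T * s T) * hinv
        _ = f Y * I := by rw [intervalIntegral.integral_const_mul, ← hI_def]
    have hdouble : (∫ Y in (1:ℝ)..Ξ, g Y * J Y) + (∫ Y in (1:ℝ)..Ξ, g Y * J Y) = I * I :=
      calc (∫ Y in (1:ℝ)..Ξ, g Y * J Y) + (∫ Y in (1:ℝ)..Ξ, g Y * J Y)
          = (∫ Y in (1:ℝ)..Ξ, ∫ T in (1:ℝ)..Ξ, g Y * L Y T)
            + ∫ Y in (1:ℝ)..Ξ, ∫ T in (1:ℝ)..Ξ, g T * L T Y := by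
            rw [← hD1.trans hswap, ← hD1]
        _ = ∫ Y in (1:ℝ)..Ξ, ((∫ T in (1:ℝ)..Ξ, g Y * L Y T)
            + ∫ T in (1:ℝ)..Ξ, g T * L T Y) :=
            (intervalIntegral.integral_add hint3 hint4).symm
        _ = ∫ Y in (1:ℝ)..Ξ, f Y * I :=
            intervalIntegral.integral_congr (fun Y _ => hinner Y)
        _ = I * I := by rw [intervalIntegral.integral_mul_const, ← hI_def]
    have step3 : ∫ Y in (1:ℝ)..Ξ, g Y * J Y = I ^ 2 / 2 := by
      linear_combination hdouble / 2
    have hXν : W X + ν = s X / Real.sqrt Z + (1/2) * I := by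
      rw [hW' X hX, hI_def]
      simp only [hf_def]
      ring
    have hrr : (∫ Y in (1:ℝ)..Ξ, ρ Y / Real.sqrt (Y + c))
        = ∫ Y in (1:ℝ)..Ξ, ρ' Y / s Y := by
      apply intervalIntegral.integral_congr
      intro Y hY
      rw [huIcc] at hY
      show ρ Y / Real.sqrt (Y + c) = ρ' Y / s Y
      rw [hρ'_eq Y hY, hs_eq Y hY.1]
    show (∫ Y in (1:ℝ)..Ξ, ρ' Y * G Y)
        = -(W X + ν) ^ 2 + (X + c) / Z
          + (1 / Real.sqrt Z) * ∫ Y in (1:ℝ)..Ξ, ρ Y / Real.sqrt (Y + c)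
    rw [step1, step2, step3, hXν, hrr]
    have hsq : s X ^ 2 = X + c := hs_sq X hX
    set u := Real.sqrt Z with hu
    have hZsq : u ^ 2 = Z := Real.sq_sqrt hZ.le
    rw [← hsq, ← hZsq]
    have hu0 : u ≠ 0 := hsZ.ne'
    field_simp
    ring
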